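/- For each k with 1 ≤ k ≤ N, the knot u_k is ≤ v_{k−1} (for k ≥ 2) and u_k < v_k; moreover, if all interior smoothness parameters r_i are ≥ 0, then u_k < v_{k−1} ≤ v_k for k ≥ 2. -/

import Mathlib

/-- If `f 0 < k ≤ f n`, there is some `i < n` with `f i < k ≤ f (i+1)`. -/
lemma knot_exists_index (f : ℕ → ℤ) (k : ℤ) :
    ∀ n : ℕ, f 0 < k → k ≤ f n → ∃ i, i < n ∧ f i < k ∧ k ≤ f (i + 1) := by
  intro n
  induction n with
  | zero => intro h0 hn; exact absurd hn (not_le.2 h0)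
  | succ n ih =>
    intro h0 hn
    by_cases h : f n < k
    · exact ⟨n, Nat.lt_succ_self n, h, hn⟩
    · obtain ⟨i, hi, h1, h2⟩ := ih h0 (not_lt.1 h)
      exact ⟨i, hi.trans (Nat.lt_succ_self n), h1, h2⟩

/-- For each k with 1 ≤ k ≤ N, the knots satisfy u_k ≤ v_{k−1} (for k ≥ 2) and u_k < v_k;
moreover if all interior smoothness parameters r_i ≥ 0, then u_k < v_{k−1} ≤ v_k for k ≥ 2.
The knot vectors are encoded by: u_k = x_i for σ(i) < k ≤ σ(i+1) (i = 0,…,m−1) and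
v_k = x_i for λ(i−1) < k ≤ λ(i) (i = 1,…,m), with σ(i) = Σ_{j=0}^{i−1}(p_{j+1}−r_j),
λ(i) = Σ_{j=1}^{i}(p_j−r_j), N = σ(m). -/
theorem knot_interval_lemma (m : ℕ) (hm : 1 ≤ m) (x : ℕ → ℝ)
    (hx : ∀ i, i < m → x i < x (i + 1))
    (p r : ℕ → ℤ)
    (hp : ∀ i, 1 ≤ i → i ≤ m → 0 ≤ p i)
    (hr0 : r 0 = -1) (hrm : r m = -1)
    (hr : ∀ i, 1 ≤ i → i ≤ m - 1 → -1 ≤ r i ∧ r i ≤ min (p i) (p (i + 1)))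
    (u v : ℤ → ℝ)
    (hu : ∀ i, i < m → ∀ k : ℤ,
      (∑ j ∈ Finset.range i, (p (j + 1) - r j)) < k →
      k ≤ (∑ j ∈ Finset.range (i + 1), (p (j + 1) - r j)) → u k = x i)
    (hv : ∀ i, 1 ≤ i → i ≤ m → ∀ k : ℤ,
      (∑ j ∈ Finset.Icc 1 (i - 1), (p j - r j)) < k →
      k ≤ (∑ j ∈ Finset.Icc 1 i, (p j - r j)) → v k = x i)
    (k : ℤ) (hk1 : 1 ≤ k) (hkN : k ≤ ∑ j ∈ Finset.range m, (p (j + 1) - r j)) :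
    (2 ≤ k → u k ≤ v (k - 1)) ∧
    u k < v k ∧
    ((∀ i, 1 ≤ i → i ≤ m - 1 → 0 ≤ r i) → 2 ≤ k → u k < v (k - 1) ∧ v (k - 1) ≤ v k) := by
  set S : ℕ → ℤ := fun i => ∑ j ∈ Finset.range i, (p (j + 1) - r j) with hS
  set L : ℕ → ℤ := fun i => ∑ j ∈ Finset.Icc 1 i, (p j - r j) with hL
  have hS0 : S 0 = 0 := by simp [hS]
  have hL0 : L 0 = 0 := by simp [hL]
  have hSstep : ∀ i, S (i + 1) = S i + (p (i + 1) - r i) := by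
    intro i; simp only [hS]; rw [Finset.sum_range_succ]
  have hLstep : ∀ i, L (i + 1) = L i + (p (i + 1) - r (i + 1)) := by
    intro i
    have := Finset.sum_Icc_succ_top (f := fun j => p j - r j)
      (Nat.succ_le_succ (Nat.zero_le i))
    simpa [hL] using this
  -- key identity σ(i) = λ(i) + r(i) + 1
  have hSL : ∀ i, S i = L i + r i + 1 := by
    intro i
    induction i with
    | zero => rw [hS0, hL0, hr0]; ring
    | succ i ih => rw [hSstep, hLstep, ih]; ring
  -- r i ≥ -1 for i ≤ m
  have hrge : ∀ i, i ≤ m → -1 ≤ r i := by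
    intro i hi
    rcases Nat.eq_zero_or_pos i with h0 | hpos
    · subst h0; rw [hr0]
    · rcases eq_or_lt_of_le hi with h | h
      · subst h; rw [hrm]
      · exact (hr i hpos (by omega)).1
  -- increments are nonnegative
  have hSinc : ∀ i, i < m → 0 ≤ p (i + 1) - r i := by
    intro i hi
    rcases Nat.eq_zero_or_pos i with h0 | hpos
    · subst h0; rw [hr0]
      have := hp 1 le_rfl hm; linarith
    · have h2 := (hr i hpos (by omega)).2
      have : r i ≤ p (i + 1) := h2.trans (min_le_right _ _)
      linarith
  have hLinc : ∀ i, 1 ≤ i → i ≤ m → 0 ≤ p i - r i := by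
    intro i h1 h2
    rcases eq_or_lt_of_le h2 with hEq | hLt
    · rw [hEq, hrm]; have := hp m hm le_rfl; linarith
    · have h2' := (hr i h1 (by omega)).2
      have : r i ≤ p i := h2'.trans (min_le_left _ _)
      linarith
  -- monotonicity of S and L up to m
  have hSmono : ∀ b, b ≤ m → ∀ a, a ≤ b → S a ≤ S b := by
    intro b
    induction b with
    | zero => intro _ a ha; interval_cases a; exact le_rfl
    | succ b ih =>
      intro hb a ha
      rcases eq_or_lt_of_le ha with h | h
      · subst h; exact le_rfl
      · have h1 : S a ≤ S b := ih (by omega) a (by omega)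
        have h2 := hSinc b (by omega)
        rw [hSstep]; linarith
  have hLmono : ∀ b, b ≤ m → ∀ a, a ≤ b → L a ≤ L b := by
    intro b
    induction b with
    | zero => intro _ a ha; interval_cases a; exact le_rfl
    | succ b ih =>
      intro hb a ha
      rcases eq_or_lt_of_le ha with h | h
      · subst h; exact le_rfl
      · have h1 : L a ≤ L b := ih (by omega) a (by omega)
        have h2 := hLinc (b + 1) (by omega) hb
        rw [hLstep]; linarith
  -- monotonicity of x up to m
  have hxstrict : ∀ b, b ≤ m → ∀ a, a < b → x a < x b := by
    intro b
    induction b with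
    | zero => intro _ a ha; omega
    | succ b ih =>
      intro hb a ha
      have hb' : x b < x (b + 1) := hx b (by omega)
      rcases eq_or_lt_of_le (Nat.lt_succ_iff.1 ha) with h | h
      · subst h; exact hb'
      · exact (ih (by omega) a h).trans hb'
  have hxmono : ∀ b, b ≤ m → ∀ a, a ≤ b → x a ≤ x b := by
    intro b hb a ha
    rcases eq_or_lt_of_le ha with h | h
    · subst h; exact le_rfl
    · exact (hxstrict b hb a h).le
  -- N = S m = L m
  have hNL : S m = L m := by rw [hSL m, hrm]; ring
  -- index i for u k
  obtain ⟨i, him, hi1, hi2⟩ := knot_exists_index S k m (by rw [hS0]; linarith) hkN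
  have huk : u k = x i := hu i him k hi1 hi2
  -- index jj+1 for v k
  obtain ⟨jj, hjm, hj1, hj2⟩ := knot_exists_index L k m (by rw [hL0]; linarith)
    (by rw [← hNL]; exact hkN)
  have hvk : v k = x (jj + 1) := by
    have := hv (jj + 1) (by omega) (by omega) k
    simpa using this hj1 hj2
  -- L i < k, hence i ≤ jj
  have hLik : L i < k := by
    have : L i ≤ S i := by have := hrge i (by omega); rw [hSL i]; linarith
    linarith
  have hij : i ≤ jj := by
    by_contra h
    push_neg at h
    have : L (jj + 1) ≤ L i := hLmono i (by omega) (jj + 1) (by omega)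
    linarith
  -- main claim 2: u k < v k
  have main2 : u k < v k := by
    rw [huk, hvk]
    exact hxstrict (jj + 1) (by omega) i (by omega)
  -- parts involving v (k-1), under 2 ≤ k
  constructor
  · -- u k ≤ v (k-1)
    intro hk2
    obtain ⟨j', hj'm, hj'1, hj'2⟩ := knot_exists_index L (k - 1) m
      (by rw [hL0]; linarith) (by rw [← hNL]; linarith)
    have hvk1 : v (k - 1) = x (j' + 1) := by
      have := hv (j' + 1) (by omega) (by omega) (k - 1)
      simpa using this hj'1 hj'2
    have hij' : i ≤ j' + 1 := by
      by_contra h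
      push_neg at h
      -- then j' + 1 ≤ i - 1, so L (j'+1) ≤ L (i-1), but L (i-1) ≤ k - 2
      have hi1' : 1 ≤ i := by omega
      obtain ⟨i', rfl⟩ : ∃ i', i = i' + 1 := ⟨i - 1, by omega⟩
      have hle : L (j' + 1) ≤ L i' := hLmono i' (by omega) (j' + 1) (by omega)
      have hpi : 0 ≤ p (i' + 1) := hp (i' + 1) (by omega) (by omega)
      have hLi' : L i' = S (i' + 1) - p (i' + 1) - 1 + (- r i' + r i') := by
        rw [hSstep, hSL i']; ring
      have : L i' ≤ k - 2 := by
        have : S (i' + 1) ≤ k - 1 := by linarith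
        rw [hLi']; linarith
      linarith
    rw [huk, hvk1]
    exact hxmono (j' + 1) (by omega) i hij'
  refine ⟨main2, ?_⟩
  · -- strict versions under r i ≥ 0
    intro hrnn hk2
    obtain ⟨j', hj'm, hj'1, hj'2⟩ := knot_exists_index L (k - 1) m
      (by rw [hL0]; linarith) (by rw [← hNL]; linarith)
    have hvk1 : v (k - 1) = x (j' + 1) := by
      have := hv (j' + 1) (by omega) (by omega) (k - 1)
      simpa using this hj'1 hj'2
    have hij' : i ≤ j' := by
      by_contra h
      push_neg at h
      have hle : L (j' + 1) ≤ L i := hLmono i (by omega) (j' + 1) (by omega)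
      rcases Nat.eq_zero_or_pos i with h0 | hpos
      · subst h0; rw [hL0] at hle; linarith
      · have hri : 0 ≤ r i := hrnn i hpos (by omega)
        have : L i ≤ S i - 1 := by rw [hSL i]; linarith
        linarith
    constructor
    · rw [huk, hvk1]
      exact hxstrict (j' + 1) (by omega) i (by omega)
    · rw [hvk1, hvk]
      have : j' ≤ jj := by
        by_contra h
        push_neg at h
        have : L (jj + 1) ≤ L j' := hLmono j' (by omega) (jj + 1) (by omega)
        linarith
      exact hxmono (jj + 1) (by omega) (j' + 1) (by omega)
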